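/- For fixed 0 < R < 1 and 0 < ε < 1, the function f(t) = −(ℓ+1)·max(0, 1−R−t) + h(t) + t·log_q ε + (1−t)·log_q(1−ε) on (0,1), where h(t) = −t log_q t − (1−t) log_q(1−t), attains its supremum: at t = q^{ℓ+1}ε/(1+(q^{ℓ+1}−1)ε) when 0 < R ≤ (1−ε)/(1+(q^{ℓ+1}−1)ε); at t = 1−R when (1−ε)/(1+(q^{ℓ+1}−1)ε) < R < 1−ε; and at t = ε with f(ε) = 0 when 1−ε ≤ R < 1. -/

import Mathlib

open Real Set

/-- The binary entropy function in `q`-its: `h(t) = -t log_q t - (1-t) log_q(1-t)`. -/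
noncomputable def entq (q t : ℝ) : ℝ := -t * Real.logb q t - (1 - t) * Real.logb q (1 - t)

/-- The objective function
`f(t) = -(ℓ+1) max(0, 1-R-t) + h(t) + t log_q ε + (1-t) log_q(1-ε)`. -/
noncomputable def fobj (q R ε : ℝ) (l : ℕ) (t : ℝ) : ℝ :=
  -((l : ℝ) + 1) * max 0 (1 - R - t) + entq q t
    + t * Real.logb q ε + (1 - t) * Real.logb q (1 - ε)

/-- `gdiv q t s = -D_q(t ‖ s)`, minus the KL divergence in base `q`. -/
noncomputable def gdiv (q t s : ℝ) : ℝ :=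
  entq q t + t * Real.logb q s + (1 - t) * Real.logb q (1 - s)

lemma gdiv_self (q s : ℝ) : gdiv q s s = 0 := by unfold gdiv entq; ring

lemma gdiv_shift (q t a s : ℝ) :
    gdiv q t a = gdiv q t s + t * (Real.logb q a - Real.logb q s)
      + (1 - t) * (Real.logb q (1 - a) - Real.logb q (1 - s)) := by
  unfold gdiv; ring

lemma gibbs {q t s : ℝ} (hq : 1 < q) (ht0 : 0 < t) (ht1 : t < 1)
    (hs0 : 0 < s) (hs1 : s < 1) : gdiv q t s ≤ 0 := by
  have hlq : 0 < Real.log q := Real.log_pos hq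
  have ht1' : 0 < 1 - t := by linarith
  have hs1' : 0 < 1 - s := by linarith
  have h1' : Real.log (s / t) ≤ s / t - 1 := Real.log_le_sub_one_of_pos (div_pos hs0 ht0)
  rw [Real.log_div hs0.ne' ht0.ne'] at h1'
  have h1 : t * (Real.log s - Real.log t) ≤ s - t := by
    calc t * (Real.log s - Real.log t) ≤ t * (s / t - 1) :=
      mul_le_mul_of_nonneg_left h1' ht0.le
    _ = s - t := by field_simp
  have h2' : Real.log ((1 - s) / (1 - t)) ≤ (1 - s) / (1 - t) - 1 :=
    Real.log_le_sub_one_of_pos (div_pos hs1' ht1')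
  rw [Real.log_div hs1'.ne' ht1'.ne'] at h2'
  have h2 : (1 - t) * (Real.log (1 - s) - Real.log (1 - t)) ≤ t - s := by
    calc (1 - t) * (Real.log (1 - s) - Real.log (1 - t)) ≤ (1 - t) * ((1 - s) / (1 - t) - 1) :=
      mul_le_mul_of_nonneg_left h2' ht1'.le
    _ = t - s := by field_simp; ring
  have heq : gdiv q t s =
      (t * (Real.log s - Real.log t) + (1 - t) * (Real.log (1 - s) - Real.log (1 - t)))
        / Real.log q := by
    unfold gdiv entq Real.logb; ring
  rw [heq]
  exact div_nonpos_of_nonpos_of_nonneg (by linarith) hlq.le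

set_option maxHeartbeats 1000000 in
/-- The function `f` attains its supremum over `(0,1)`:
at `t₁ = q^{ℓ+1}ε/(1+(q^{ℓ+1}-1)ε)` when `0 < R ≤ (1-ε)/(1+(q^{ℓ+1}-1)ε)`;
at `t = 1-R` when `(1-ε)/(1+(q^{ℓ+1}-1)ε) < R < 1-ε`;
and at `t = ε` with `f(ε) = 0` when `1-ε ≤ R < 1`. -/
theorem stmt_13 (q R ε : ℝ) (l : ℕ) (hq : 2 ≤ q)
    (hR0 : 0 < R) (hR1 : R < 1) (hε0 : 0 < ε) (hε1 : ε < 1) :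
    (R ≤ (1 - ε) / (1 + (q ^ (l + 1) - 1) * ε) →
        IsMaxOn (fobj q R ε l) (Ioo (0 : ℝ) 1)
          (q ^ (l + 1) * ε / (1 + (q ^ (l + 1) - 1) * ε)))
    ∧ ((1 - ε) / (1 + (q ^ (l + 1) - 1) * ε) < R → R < 1 - ε →
        IsMaxOn (fobj q R ε l) (Ioo (0 : ℝ) 1) (1 - R))
    ∧ (1 - ε ≤ R →
        IsMaxOn (fobj q R ε l) (Ioo (0 : ℝ) 1) ε ∧ fobj q R ε l ε = 0) := by
  have hq1 : (1 : ℝ) < q := by linarith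
  have hlq : 0 < Real.log q := Real.log_pos hq1
  set Q : ℝ := q ^ (l + 1) with hQdef
  have hQ1 : 1 < Q := by
    have h2 : q ≤ q ^ (l + 1) := le_self_pow₀ (by linarith) (Nat.succ_ne_zero l)
    linarith
  have hQ0 : 0 < Q := by linarith
  set Z : ℝ := 1 + (Q - 1) * ε with hZdef
  have hZ1 : 1 < Z := by nlinarith
  have hZ0 : 0 < Z := by linarith
  set e' : ℝ := Q * ε / Z with he'def
  have he'0 : 0 < e' := div_pos (mul_pos hQ0 hε0) hZ0
  have he'1 : e' < 1 := by rw [he'def, div_lt_one hZ0]; nlinarith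
  have h1e' : 1 - e' = (1 - ε) / Z := by
    rw [he'def]; field_simp; ring
  have h1ε : (0 : ℝ) < 1 - ε := by linarith
  have hlogQ : Real.logb q Q = (l : ℝ) + 1 := by
    rw [hQdef, Real.logb_pow, Real.logb_self_eq_one hq1]
    push_cast; ring
  have hA' : Real.logb q e' = Real.logb q ε + ((l : ℝ) + 1) - Real.logb q Z := by
    rw [he'def, Real.logb_div (by positivity) hZ0.ne', Real.logb_mul hQ0.ne' hε0.ne', hlogQ]
    ring
  have hB' : Real.logb q (1 - e') = Real.logb q (1 - ε) - Real.logb q Z := by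
    rw [h1e', Real.logb_div h1ε.ne' hZ0.ne']
  have hfobj : ∀ t : ℝ, fobj q R ε l t = -((l : ℝ) + 1) * max 0 (1 - R - t) + gdiv q t ε := by
    intro t; unfold fobj gdiv; ring
  have hdec : ∀ t : ℝ, gdiv q t ε = gdiv q t e' - ((l : ℝ) + 1) * t + Real.logb q Z := by
    intro t
    rw [gdiv_shift q t ε e', hA', hB']; ring
  have hL : (0 : ℝ) ≤ (l : ℝ) + 1 := by positivity
  refine ⟨?_, ?_, ?_⟩
  · -- Case 1
    intro hRle
    rw [isMaxOn_iff]
    rintro t ⟨ht0, ht1⟩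
    have hg : gdiv q t e' ≤ 0 := gibbs hq1 ht0 ht1 he'0 he'1
    have hRe' : R ≤ 1 - e' := by rw [h1e']; exact hRle
    have hmaxe' : max 0 (1 - R - e') = 1 - R - e' := max_eq_right (by linarith)
    have hmax1 : 1 - R - t ≤ max 0 (1 - R - t) := le_max_right _ _
    have hprod : ((l : ℝ) + 1) * (1 - R - t) ≤ ((l : ℝ) + 1) * max 0 (1 - R - t) :=
      mul_le_mul_of_nonneg_left hmax1 hL
    rw [hfobj t, hfobj e', hdec t, hdec e', hmaxe', gdiv_self]
    linarith
  · -- Case 2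
    intro hRgt hRlt
    rw [isMaxOn_iff]
    rintro t ⟨ht0, ht1⟩
    have hs0 : 0 < 1 - R := by linarith
    have hs1 : 1 - R < 1 := by linarith
    have hsle' : 1 - R < e' := by
      have h' : 1 - e' < R := by rw [h1e']; exact hRgt
      linarith
    have hεs : ε < 1 - R := by linarith
    have hgts : gdiv q t (1 - R) ≤ 0 := gibbs hq1 ht0 ht1 hs0 hs1
    have hmaxs : max 0 (1 - R - (1 - R)) = 0 := by norm_num
    have e2 : gdiv q (1 - R) e' = gdiv q (1 - R) (1 - R)
        + (1 - R) * (Real.logb q e' - Real.logb q (1 - R))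
        + (1 - (1 - R)) * (Real.logb q (1 - e') - Real.logb q (1 - (1 - R))) :=
      gdiv_shift q (1 - R) e' (1 - R)
    have e1 : gdiv q t e' = gdiv q t (1 - R)
        + t * (Real.logb q e' - Real.logb q (1 - R))
        + (1 - t) * (Real.logb q (1 - e') - Real.logb q (1 - (1 - R))) :=
      gdiv_shift q t e' (1 - R)
    have e2ε : gdiv q (1 - R) ε = gdiv q (1 - R) (1 - R)
        + (1 - R) * (Real.logb q ε - Real.logb q (1 - R))
        + (1 - (1 - R)) * (Real.logb q (1 - ε) - Real.logb q (1 - (1 - R))) :=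
      gdiv_shift q (1 - R) ε (1 - R)
    have e1ε : gdiv q t ε = gdiv q t (1 - R)
        + t * (Real.logb q ε - Real.logb q (1 - R))
        + (1 - t) * (Real.logb q (1 - ε) - Real.logb q (1 - (1 - R))) :=
      gdiv_shift q t ε (1 - R)
    have hgss : gdiv q (1 - R) (1 - R) = 0 := gdiv_self q (1 - R)
    rcases le_or_gt t (1 - R) with hts | hts
    · -- t ≤ 1-R : work with reference e'
      have hmaxt : max 0 (1 - R - t) = 1 - R - t := max_eq_right (by linarith)
      have hbr : Real.logb q ((1 - R) * (1 - e')) ≤ Real.logb q (e' * (1 - (1 - R))) :=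
        Real.logb_le_logb_of_le hq1 (mul_pos hs0 (by linarith)) (by nlinarith)
      rw [Real.logb_mul hs0.ne' (by linarith : (1 : ℝ) - e' ≠ 0),
        Real.logb_mul he'0.ne' (by linarith : (1 : ℝ) - (1 - R) ≠ 0)] at hbr
      have hprod : (t - (1 - R)) *
          ((Real.logb q e' - Real.logb q (1 - R))
            - (Real.logb q (1 - e') - Real.logb q (1 - (1 - R)))) ≤ 0 :=
        mul_nonpos_of_nonpos_of_nonneg (by linarith) (by linarith)
      have key : gdiv q t e' ≤ gdiv q (1 - R) e' := by linarith [hgts, hprod, e1, e2, hgss]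
      rw [hfobj t, hfobj (1 - R), hdec t, hdec (1 - R), hmaxt, hmaxs]
      linarith
    · -- t > 1-R : work with reference ε
      have hmaxt : max 0 (1 - R - t) = 0 := max_eq_left (by linarith)
      have hbr : Real.logb q (ε * (1 - (1 - R))) ≤ Real.logb q ((1 - R) * (1 - ε)) :=
        Real.logb_le_logb_of_le hq1 (mul_pos hε0 (by linarith)) (by nlinarith)
      rw [Real.logb_mul hε0.ne' (by linarith : (1 : ℝ) - (1 - R) ≠ 0),
        Real.logb_mul hs0.ne' h1ε.ne'] at hbr
      have hprod : (t - (1 - R)) *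
          ((Real.logb q ε - Real.logb q (1 - R))
            - (Real.logb q (1 - ε) - Real.logb q (1 - (1 - R)))) ≤ 0 :=
        mul_nonpos_of_nonneg_of_nonpos (by linarith) (by linarith)
      have key : gdiv q t ε ≤ gdiv q (1 - R) ε := by linarith [hgts, hprod, e1ε, e2ε, hgss]
      rw [hfobj t, hfobj (1 - R), hmaxt, hmaxs]
      linarith
  · -- Case 3
    intro hR
    have hmaxε : max 0 (1 - R - ε) = 0 := max_eq_left (by linarith)
    constructor
    · rw [isMaxOn_iff]
      rintro t ⟨ht0, ht1⟩
      have hg : gdiv q t ε ≤ 0 := gibbs hq1 ht0 ht1 hε0 hε1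
      have hmax0 : (0 : ℝ) ≤ max 0 (1 - R - t) := le_max_left _ _
      have hprod : 0 ≤ ((l : ℝ) + 1) * max 0 (1 - R - t) := mul_nonneg hL hmax0
      rw [hfobj t, hfobj ε, hmaxε, gdiv_self]
      linarith
    · rw [hfobj ε, hmaxε, gdiv_self]; ring
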